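/- The function N₂(x,y; x',y') = −(1/4π) log[(cosh(π(x−x')) − cos(π(y−y')))(cosh(π(x−x')) − cos(π(y+y')))] satisfies ∂N₂/∂y = 0 at y = 0 and y = 1 whenever (x,y) ≠ (x',y') and (x,y) ≠ (x',−y'), i.e. its normal derivative vanishes on both walls of the strip 0 ≤ y ≤ 1. -/

import Mathlib

open Real

lemma channel_aux (A y' y₀ : ℝ)
    (h1 : 0 < Real.cosh A - Real.cos (π * (y₀ - y')))
    (h2 : 0 < Real.cosh A - Real.cos (π * (y₀ + y')))
    (hsin : Real.sin (π * (y₀ - y')) * (Real.cosh A - Real.cos (π * (y₀ + y')))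
        + (Real.cosh A - Real.cos (π * (y₀ - y'))) * Real.sin (π * (y₀ + y')) = 0) :
    deriv (fun y => -(1 / (4 * π)) * Real.log
      ((Real.cosh A - Real.cos (π * (y - y')))
        * (Real.cosh A - Real.cos (π * (y + y'))))) y₀ = 0 := by
  have d1 : HasDerivAt (fun y : ℝ => π * (y - y')) π y₀ := by
    simpa using ((hasDerivAt_id y₀).sub_const y').const_mul π
  have d2 : HasDerivAt (fun y : ℝ => π * (y + y')) π y₀ := by
    simpa using ((hasDerivAt_id y₀).add_const y').const_mul π
  have c1 : HasDerivAt (fun y : ℝ => Real.cosh A - Real.cos (π * (y - y')))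
      (Real.sin (π * (y₀ - y')) * π) y₀ := by
    simpa using ((Real.hasDerivAt_cos (π * (y₀ - y'))).comp y₀ d1).const_sub (Real.cosh A)
  have c2 : HasDerivAt (fun y : ℝ => Real.cosh A - Real.cos (π * (y + y')))
      (Real.sin (π * (y₀ + y')) * π) y₀ := by
    simpa using ((Real.hasDerivAt_cos (π * (y₀ + y'))).comp y₀ d2).const_sub (Real.cosh A)
  have hm := c1.mul c2
  have hne : (Real.cosh A - Real.cos (π * (y₀ - y')))
      * (Real.cosh A - Real.cos (π * (y₀ + y'))) ≠ 0 := (mul_pos h1 h2).ne'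
  have hl := (hm.log hne).const_mul (-(1 / (4 * π)))
  simp only [Pi.mul_apply] at hl
  rw [hl.deriv]
  have hz : Real.sin (π * (y₀ - y')) * π * (Real.cosh A - Real.cos (π * (y₀ + y')))
      + (Real.cosh A - Real.cos (π * (y₀ - y'))) * (Real.sin (π * (y₀ + y')) * π) = 0 := by
    linear_combination π * hsin
  rw [hz]
  simp

lemma cos_lt_one_of_sin_ne (θ : ℝ) (h : Real.sin θ ≠ 0) : Real.cos θ < 1 := by
  nlinarith [Real.sin_sq_add_cos_sq θ, pow_pos (abs_pos.mpr h) 2, sq_abs (Real.sin θ), Real.cos_le_one θ]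

/-- The Neumann function of the channel `0 ≤ y ≤ 1` built by images,
`N₂ = −(1/4π) log[(cosh π(x−x') − cos π(y−y'))(cosh π(x−x') − cos π(y+y'))]`,
has vanishing normal derivative on both walls `y = 0` and `y = 1`
away from the singular points. -/
theorem channel_neumann_function_walls (N : ℝ → ℝ → ℝ → ℝ → ℝ)
    (hN : ∀ x y x' y', N x y x' y'
      = -(1 / (4 * π)) * Real.log
          ((Real.cosh (π * (x - x')) - Real.cos (π * (y - y')))
            * (Real.cosh (π * (x - x')) - Real.cos (π * (y + y')))))
    (x x' y' : ℝ) (hy' : y' ∈ Set.Ioo (0 : ℝ) 1) :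
    (((x, (0 : ℝ)) ≠ (x', y') ∧ (x, (0 : ℝ)) ≠ (x', -y')) →
      deriv (fun y => N x y x' y') 0 = 0)
    ∧ (((x, (1 : ℝ)) ≠ (x', y') ∧ (x, (1 : ℝ)) ≠ (x', -y')) →
      deriv (fun y => N x y x' y') 1 = 0) := by
  obtain ⟨hy0, hy1⟩ := hy'
  have hfun : (fun y => N x y x' y') = fun y => -(1 / (4 * π)) * Real.log
      ((Real.cosh (π * (x - x')) - Real.cos (π * (y - y')))
        * (Real.cosh (π * (x - x')) - Real.cos (π * (y + y')))) :=
    funext fun y => hN x y x' y'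
  have hs : 0 < Real.sin (π * y') :=
    Real.sin_pos_of_pos_of_lt_pi (by positivity)
      (by nlinarith [Real.pi_pos])
  have hcosh : 1 ≤ Real.cosh (π * (x - x')) := Real.one_le_cosh _
  have hslt : Real.cos (π * y') < 1 := cos_lt_one_of_sin_ne _ hs.ne'
  have hsgt : -1 < Real.cos (π * y') := by
    nlinarith [Real.sin_sq_add_cos_sq (π * y'), Real.neg_one_le_cos (π * y'), hs]
  constructor
  · intro _
    rw [hfun]
    apply channel_aux
    · have e : π * ((0:ℝ) - y') = -(π * y') := by ring
      rw [e, Real.cos_neg]; linarith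
    · have e : π * ((0:ℝ) + y') = π * y' := by ring
      rw [e]; linarith
    · have e1 : π * ((0:ℝ) - y') = -(π * y') := by ring
      have e2 : π * ((0:ℝ) + y') = π * y' := by ring
      rw [e1, e2, Real.cos_neg, Real.sin_neg]; ring
  · intro _
    rw [hfun]
    apply channel_aux
    · have e : π * ((1:ℝ) - y') = π - π * y' := by ring
      rw [e, Real.cos_pi_sub]; linarith
    · have e : π * ((1:ℝ) + y') = π + π * y' := by ring
      rw [e, Real.cos_add, Real.cos_pi, Real.sin_pi]; nlinarith
    · have e1 : π * ((1:ℝ) - y') = π - π * y' := by ring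
      have e2 : π * ((1:ℝ) + y') = π + π * y' := by ring
      rw [e1, e2, Real.cos_pi_sub, Real.sin_pi_sub, Real.cos_add, Real.sin_add,
        Real.cos_pi, Real.sin_pi]; ring
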